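/- Let (X_n)_{n≥0} be i.i.d. nonnegative random variables with E[X_0] ≤ C < ∞, let a_j := P[X_0 ≥ j] and b_k := P[sup_{n≥0}(X_n - n) ≥ k]. Then for every k ≥ 1, (1/(1+C)) ∑_{j≥k} a_j ≤ b_k ≤ ∑_{j≥k} a_j. -/

import Mathlib

open MeasureTheory ProbabilityTheory Filter
open scoped ENNReal NNReal Topology

set_option maxHeartbeats 1000000


lemma aux_layercake {Ω : Type*} [MeasurableSpace Ω] (μ : Measure Ω) {g : Ω → ℝ}
    (hg : Measurable g) (h0 : ∀ ω, 0 ≤ g ω) :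
    ∑' n : ℕ, μ {ω | (n : ℝ) + 1 ≤ g ω} ≤ ∫⁻ ω, ENNReal.ofReal (g ω) ∂μ := by
  classical
  have hms : ∀ n : ℕ, MeasurableSet {ω | (n : ℝ) + 1 ≤ g ω} := fun n =>
    measurableSet_le measurable_const hg
  rw [ENNReal.tsum_eq_iSup_nat]
  refine iSup_le fun N => ?_
  have key : ∀ ω, ∑ n ∈ Finset.range N, ({ω' | (n : ℝ) + 1 ≤ g ω'}.indicator (1 : Ω → ℝ≥0∞) ω)
      ≤ ENNReal.ofReal (g ω) := by
    intro ω
    have h1 : ∑ n ∈ Finset.range N, ({ω' | (n : ℝ) + 1 ≤ g ω'}.indicator (1 : Ω → ℝ≥0∞) ω)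
        = (((Finset.range N).filter (fun n : ℕ => ((n:ℝ) + 1 ≤ g ω))).card : ℝ≥0∞) := by
      rw [Finset.card_filter]
      push_cast
      refine Finset.sum_congr rfl fun n _ => ?_
      by_cases h : (n:ℝ) + 1 ≤ g ω <;> simp [Set.indicator_apply, h]
    rw [h1]
    have h2 : ((Finset.range N).filter fun n : ℕ => ((n:ℝ)+1 ≤ g ω)) ⊆ Finset.range (Nat.floor (g ω)) := by
      intro i hi
      simp only [Finset.mem_filter, Finset.mem_range] at hi ⊢
      have : (i+1 : ℕ) ≤ Nat.floor (g ω) := Nat.le_floor (by push_cast; linarith [hi.2])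
      omega
    calc (((Finset.range N).filter (fun n : ℕ => ((n:ℝ) + 1 ≤ g ω))).card : ℝ≥0∞)
        ≤ (Nat.floor (g ω) : ℝ≥0∞) := by
          have := Finset.card_le_card h2
          simp only [Finset.card_range] at this
          exact_mod_cast this
      _ ≤ ENNReal.ofReal (g ω) := by
          rw [← ENNReal.ofReal_natCast]
          exact ENNReal.ofReal_le_ofReal (Nat.floor_le (h0 ω))
  calc ∑ n ∈ Finset.range N, μ {ω | (n : ℝ) + 1 ≤ g ω}
      = ∑ n ∈ Finset.range N, ∫⁻ ω, {ω' | (n : ℝ) + 1 ≤ g ω'}.indicator (1 : Ω → ℝ≥0∞) ω ∂μ := by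
        refine Finset.sum_congr rfl fun n _ => ?_
        exact (lintegral_indicator_one (hms n)).symm
    _ = ∫⁻ ω, ∑ n ∈ Finset.range N, {ω' | (n : ℝ) + 1 ≤ g ω'}.indicator (1 : Ω → ℝ≥0∞) ω ∂μ :=
        (lintegral_finset_sum _ fun n _ => (measurable_const.indicator (hms n))).symm
    _ ≤ ∫⁻ ω, ENNReal.ofReal (g ω) ∂μ := lintegral_mono key

lemma aux_tail {Ω : Type*} [MeasurableSpace Ω]
    (μ : Measure Ω) (X : ℕ → Ω → ℝ)
    (C : ℝ)
    (hLC : ∑' n : ℕ, μ {ω | (n : ℝ) + 1 ≤ X 0 ω} ≤ ENNReal.ofReal C)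
    (k : ℕ) (hk : 1 ≤ k) :
    ∑' n : ℕ, μ {ω | (k : ℝ) + n ≤ X 0 ω} ≤ ENNReal.ofReal C := by
  have heq : ∀ n : ℕ, μ {ω | (k : ℝ) + n ≤ X 0 ω}
      = μ {ω | ((n + (k-1) : ℕ) : ℝ) + 1 ≤ X 0 ω} := by
    intro n
    have hth : ((n + (k-1) : ℕ) : ℝ) + 1 = (k : ℝ) + n := by
      push_cast [Nat.cast_sub hk]
      ring
    exact congrArg μ (by rw [hth])
  calc ∑' n : ℕ, μ {ω | (k : ℝ) + n ≤ X 0 ω}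
      = ∑' n : ℕ, μ {ω | ((n + (k-1) : ℕ) : ℝ) + 1 ≤ X 0 ω} := tsum_congr heq
    _ ≤ ∑' n : ℕ, μ {ω | (n : ℝ) + 1 ≤ X 0 ω} := by
        rw [← Summable.sum_add_tsum_nat_add' (f := fun n : ℕ => μ {ω | (n : ℝ) + 1 ≤ X 0 ω})
          (k := k-1) ENNReal.summable]
        exact le_add_self
    _ ≤ ENNReal.ofReal C := hLC

lemma aux_upper {Ω : Type*} [MeasurableSpace Ω]
    (μ : Measure Ω) [IsProbabilityMeasure μ] (X : ℕ → Ω → ℝ)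
    (hmeas : ∀ n, Measurable (X n))
    (hpos : ∀ n ω, 0 ≤ X n ω)
    (hid_le : ∀ (n : ℕ) (c : ℝ), μ {ω | c ≤ X n ω} = μ {ω | c ≤ X 0 ω})
    (hid_lt : ∀ (n : ℕ) (c : ℝ), μ {ω | c < X n ω} = μ {ω | c < X 0 ω})
    (C : ℝ) (hC0 : 0 ≤ C)
    (hLC : ∑' n : ℕ, μ {ω | (n : ℝ) + 1 ≤ X 0 ω} ≤ ENNReal.ofReal C)
    (k : ℕ) (hk : 1 ≤ k) :
    μ {ω | (k : ℝ) ≤ ⨆ n : ℕ, (X n ω - n)} ≤ ∑' n : ℕ, μ {ω | (k : ℝ) + n ≤ X 0 ω} := by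
  classical
  set T : Set Ω := {ω | (k : ℝ) ≤ ⨆ n : ℕ, (X n ω - n)} with hT
  set a' : ℕ → ℝ≥0∞ := fun n => μ {ω | (k : ℝ) + n ≤ X 0 ω} with ha'
  set t : ℕ → ℕ → ℝ≥0∞ := fun m n => μ {ω | (k : ℝ) + n - 1/((m:ℝ)+1) < X 0 ω} with ht
  set b : ℕ → ℝ≥0∞ := fun n => μ {ω | (n : ℝ) ≤ X 0 ω} with hb
  have hk1 : (1 : ℝ) ≤ (k : ℝ) := by exact_mod_cast hk
  -- Step U1
  have hU1 : ∀ m : ℕ, μ T ≤ ∑' n, t m n := by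
    intro m
    have hsub : T ⊆ ⋃ n, {ω | (k : ℝ) + n - 1/((m:ℝ)+1) < X n ω} := by
      intro ω hω
      by_contra hcon
      simp only [Set.mem_iUnion, Set.mem_setOf_eq, not_exists, not_lt] at hcon
      have hbd : (⨆ n : ℕ, (X n ω - n)) ≤ (k : ℝ) - 1/((m:ℝ)+1) := by
        refine ciSup_le fun n => ?_
        have := hcon n
        linarith
      have hklek : (k : ℝ) ≤ (k : ℝ) - 1/((m:ℝ)+1) := le_trans hω hbd
      have : (0:ℝ) < 1/((m:ℝ)+1) := by positivity
      linarith
    calc μ T ≤ μ (⋃ n, {ω | (k : ℝ) + n - 1/((m:ℝ)+1) < X n ω}) := measure_mono hsub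
      _ ≤ ∑' n, μ {ω | (k : ℝ) + n - 1/((m:ℝ)+1) < X n ω} := measure_iUnion_le _
      _ = ∑' n, t m n := by
          refine tsum_congr fun n => ?_
          rw [ht]
          exact hid_lt n _
  -- antitonicity of thresholds
  have hEanti : ∀ n : ℕ, Antitone (fun m : ℕ => {ω | (k : ℝ) + n - 1/((m:ℝ)+1) < X 0 ω}) := by
    intro n m m' hmm ω hω
    simp only [Set.mem_setOf_eq] at hω ⊢
    have h1 : (1:ℝ)/(m'+1) ≤ 1/(m+1) := by
      apply one_div_le_one_div_of_le (by positivity)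
      have : (m:ℝ) ≤ m' := by exact_mod_cast hmm
      linarith
    linarith
  have htanti : ∀ n : ℕ, Antitone (fun m => t m n) := fun n m m' hmm =>
    measure_mono (hEanti n hmm)
  -- Step U2 : per-n convergence
  have hU2 : ∀ n : ℕ, Tendsto (fun m => t m n) atTop (𝓝 (a' n)) := by
    intro n
    have hiInter : (⋂ m : ℕ, {ω | (k : ℝ) + n - 1/((m:ℝ)+1) < X 0 ω}) = {ω | (k : ℝ) + n ≤ X 0 ω} := by
      ext ω
      simp only [Set.mem_iInter, Set.mem_setOf_eq]
      constructor
      · intro h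
        by_contra hcon
        push_neg at hcon
        obtain ⟨m, hm⟩ := exists_nat_one_div_lt (sub_pos.mpr hcon)
        have := h m
        linarith
      · intro h m
        have : (0:ℝ) < 1/((m:ℝ)+1) := by positivity
        linarith
    have := tendsto_measure_iInter_atTop
      (s := fun m : ℕ => {ω | (k : ℝ) + n - 1/((m:ℝ)+1) < X 0 ω})
      (fun m => ((measurableSet_lt measurable_const (hmeas 0))).nullMeasurableSet)
      (hEanti n) ⟨0, measure_ne_top μ _⟩
    rw [hiInter] at this
    exact this
  -- summability bounds
  have hb_sum : ∑' n, b n ≤ 1 + ENNReal.ofReal C := by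
    rw [← Summable.sum_add_tsum_nat_add' (f := fun n => b n) (k := 1) ENNReal.summable]
    refine add_le_add ?_ ?_
    · simp only [Finset.range_one, Finset.sum_singleton]
      exact prob_le_one
    · refine le_trans (le_of_eq (tsum_congr fun n => ?_)) hLC
      show b (n+1) = _
      rw [hb]
      push_cast
      rfl
  have hb_ne : ∑' n, b n ≠ ∞ :=
    ne_top_of_le_ne_top (by finiteness) hb_sum
  have ht0_le : ∀ n, t 0 n ≤ b n := by
    intro n
    refine measure_mono fun ω hω => ?_
    simp only [Set.mem_setOf_eq] at hω ⊢
    push_cast at hω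
    linarith
  have ht0_ne : ∑' n, t 0 n ≠ ∞ :=
    ne_top_of_le_ne_top hb_ne (ENNReal.tsum_le_tsum ht0_le)
  -- Step U4
  have hstep : ∀ N : ℕ, μ T ≤ ∑ n ∈ Finset.range N, a' n + ∑' n, t 0 (n + N) := by
    intro N
    have hbound : ∀ m, μ T ≤ ∑ n ∈ Finset.range N, t m n + ∑' n, t 0 (n + N) := by
      intro m
      calc μ T ≤ ∑' n, t m n := hU1 m
        _ = ∑ n ∈ Finset.range N, t m n + ∑' n, t m (n + N) :=
            (Summable.sum_add_tsum_nat_add' (f := fun n => t m n) (k := N) ENNReal.summable).symm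
        _ ≤ ∑ n ∈ Finset.range N, t m n + ∑' n, t 0 (n + N) := by
            gcongr with n
            exact htanti _ (Nat.zero_le m)
    have htend : Tendsto (fun m => ∑ n ∈ Finset.range N, t m n + ∑' n, t 0 (n + N)) atTop
        (𝓝 (∑ n ∈ Finset.range N, a' n + ∑' n, t 0 (n + N))) := by
      refine Tendsto.add_const _ ?_
      exact tendsto_finset_sum _ fun n _ => hU2 n
    exact ge_of_tendsto' htend hbound
  have hTN : Tendsto (fun N => ∑' n, t 0 (n + N)) atTop (𝓝 0) :=
    ENNReal.tendsto_sum_nat_add _ ht0_ne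
  have hfin : Tendsto (fun N => ∑ n ∈ Finset.range N, a' n + ∑' n, t 0 (n + N)) atTop
      (𝓝 (∑' n, a' n + 0)) :=
    Tendsto.add (ENNReal.tendsto_nat_tsum _) hTN
  have := ge_of_tendsto' hfin hstep
  rwa [add_zero] at this

lemma aux_lower {Ω : Type*} [MeasurableSpace Ω]
    (μ : Measure Ω) [IsProbabilityMeasure μ] (X : ℕ → Ω → ℝ)
    (hmeas : ∀ n, Measurable (X n))
    (hindep : iIndepFun X μ)
    (hpos : ∀ n ω, 0 ≤ X n ω)
    (hid_le : ∀ (n : ℕ) (c : ℝ), μ {ω | c ≤ X n ω} = μ {ω | c ≤ X 0 ω})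
    (C : ℝ) (hC0 : 0 ≤ C)
    (hLC : ∑' n : ℕ, μ {ω | (n : ℝ) + 1 ≤ X 0 ω} ≤ ENNReal.ofReal C)
    (k : ℕ) (hk : 1 ≤ k) :
    (1/(1+C)) * (∑' n : ℕ, (μ {ω | (k : ℝ) + n ≤ X 0 ω}).toReal)
      ≤ (μ {ω | (k : ℝ) ≤ ⨆ n : ℕ, (X n ω - n)}).toReal := by
  classical
  set T : Set Ω := {ω | (k : ℝ) ≤ ⨆ n : ℕ, (X n ω - n)} with hT
  set a' : ℕ → ℝ≥0∞ := fun n => μ {ω | (k : ℝ) + n ≤ X 0 ω} with ha'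
  have hk1 : (1 : ℝ) ≤ (k : ℝ) := by exact_mod_cast hk
  set A : ℕ → Set Ω := fun n => {ω | (k : ℝ) + n ≤ X n ω} with hA
  have hAmeas : ∀ n, MeasurableSet (A n) := fun n =>
    measurableSet_le measurable_const (hmeas n)
  have hAmu : ∀ n, μ (A n) = a' n := fun n => hid_le n _
  -- independence product formula
  have hAc_comap : ∀ n, MeasurableSet[MeasurableSpace.comap (X n) inferInstance] ((A n)ᶜ) :=
    fun n => ⟨Set.Iio ((k : ℝ) + n), measurableSet_Iio, by
      ext ω; simp [hA, Set.mem_setOf_eq, not_le]⟩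
  have hprod : ∀ N, μ (⋂ n ∈ Finset.range N, (A n)ᶜ) = ∏ n ∈ Finset.range N, μ ((A n)ᶜ) :=
    fun N => hindep.meas_biInter (fun i _ => hAc_comap i)
  -- continuity from above
  set s : ℕ → Set Ω := fun N => ⋂ n ∈ Finset.range N, (A n)ᶜ with hs
  have hsm : ∀ N, NullMeasurableSet (s N) μ := fun N =>
    (MeasurableSet.biInter (Finset.range N).countable_toSet
      fun n _ => (hAmeas n).compl).nullMeasurableSet
  have hanti : Antitone s := by
    intro N N' hNN ω hω
    simp only [hs, Set.mem_iInter, Finset.mem_range] at hω ⊢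
    exact fun n hn => hω n (lt_of_lt_of_le hn hNN)
  have hInter : ⋂ N, s N = ⋂ n, (A n)ᶜ := by
    ext ω
    simp only [hs, Set.mem_iInter, Finset.mem_range]
    exact ⟨fun h n => h (n+1) n (Nat.lt_succ_self n), fun h N n _ => h n⟩
  have htendμ : Tendsto (fun N => μ (s N)) atTop (𝓝 (μ (⋂ n, (A n)ᶜ))) := by
    have := tendsto_measure_iInter_atTop hsm hanti ⟨0, measure_ne_top μ _⟩
    rwa [hInter] at this
  -- real-valued quantities
  set p : ℕ → ℝ := fun n => (a' n).toReal with hp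
  have hcompl : ∀ n, μ ((A n)ᶜ) = 1 - a' n := by
    intro n
    rw [measure_compl (hAmeas n) (measure_ne_top μ _), hAmu n, measure_univ]
  have hprodR : ∀ N, (μ (s N)).toReal = ∏ n ∈ Finset.range N, (1 - p n) := by
    intro N
    rw [hs, hprod N, ENNReal.toReal_prod]
    refine Finset.prod_congr rfl fun n _ => ?_
    rw [hcompl n, ENNReal.toReal_sub_of_le prob_le_one ENNReal.one_ne_top, ENNReal.toReal_one]
  set L : ℝ := (μ (⋂ n, (A n)ᶜ)).toReal with hL
  have htendL : Tendsto (fun N => ∏ n ∈ Finset.range N, (1 - p n)) atTop (𝓝 L) := by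
    have h2 := (ENNReal.tendsto_toReal (measure_ne_top μ _)).comp htendμ
    exact h2.congr hprodR
  -- summability facts
  have hS_le : ∑' n, a' n ≤ ENNReal.ofReal C := by
    have heq : ∀ n : ℕ, a' n = μ {ω | ((n + (k-1) : ℕ) : ℝ) + 1 ≤ X 0 ω} := by
      intro n
      have hth : ((n + (k-1) : ℕ) : ℝ) + 1 = (k : ℝ) + n := by
        push_cast [Nat.cast_sub hk]
        ring
      rw [ha']
      exact congrArg μ (by rw [hth])
    calc ∑' n, a' n = ∑' n, μ {ω | ((n + (k-1) : ℕ) : ℝ) + 1 ≤ X 0 ω} := tsum_congr heq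
      _ ≤ ∑' n : ℕ, μ {ω | (n : ℝ) + 1 ≤ X 0 ω} := by
          rw [← Summable.sum_add_tsum_nat_add' (f := fun n : ℕ => μ {ω | (n : ℝ) + 1 ≤ X 0 ω})
            (k := k-1) ENNReal.summable]
          exact le_add_self
      _ ≤ ENNReal.ofReal C := hLC
  have hsum_ne : ∑' n, a' n ≠ ∞ :=
    ne_top_of_le_ne_top ENNReal.ofReal_ne_top hS_le
  set S : ℝ := ∑' n, p n with hSdef
  have hSeq : S = (∑' n, a' n).toReal := by
    rw [hSdef, ENNReal.tsum_toReal_eq fun n => measure_ne_top μ _]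
  have hSsummable : Summable p := ENNReal.summable_toReal hsum_ne
  have hSC : S ≤ C := by
    rw [hSeq]
    calc (∑' n, a' n).toReal ≤ (ENNReal.ofReal C).toReal :=
        ENNReal.toReal_mono ENNReal.ofReal_ne_top hS_le
      _ = C := ENNReal.toReal_ofReal hC0
  have hS0 : 0 ≤ S := tsum_nonneg fun n => ENNReal.toReal_nonneg
  have hp0 : ∀ n, 0 ≤ p n := fun n => ENNReal.toReal_nonneg
  have hp1 : ∀ n, p n ≤ 1 := by
    intro n
    calc p n ≤ (1 : ℝ≥0∞).toReal := ENNReal.toReal_mono ENNReal.one_ne_top prob_le_one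
      _ = 1 := ENNReal.toReal_one
  -- product ≤ exp(-partial sum)
  have hprodle : ∀ N, ∏ n ∈ Finset.range N, (1 - p n) ≤ Real.exp (-(∑ n ∈ Finset.range N, p n)) := by
    intro N
    calc ∏ n ∈ Finset.range N, (1 - p n) ≤ ∏ n ∈ Finset.range N, Real.exp (-(p n)) :=
        Finset.prod_le_prod (fun n _ => by linarith [hp1 n])
          (fun n _ => by have := Real.add_one_le_exp (-(p n)); linarith)
      _ = Real.exp (∑ n ∈ Finset.range N, -(p n)) := (Real.exp_sum _ _).symm
      _ = Real.exp (-(∑ n ∈ Finset.range N, p n)) := by rw [Finset.sum_neg_distrib]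
  have htendexp : Tendsto (fun N => Real.exp (-(∑ n ∈ Finset.range N, p n))) atTop
      (𝓝 (Real.exp (-S))) :=
    (Real.continuous_exp.tendsto _).comp (hSsummable.hasSum.tendsto_sum_nat.neg)
  have hLexp : L ≤ Real.exp (-S) := le_of_tendsto_of_tendsto' htendL htendexp hprodle
  -- union measure
  set W : Set Ω := ⋃ n, A n with hW
  have hWmeas : MeasurableSet W := MeasurableSet.iUnion hAmeas
  have hWc : ⋂ n, (A n)ᶜ = Wᶜ := by rw [hW, Set.compl_iUnion]
  have hμW : (μ W).toReal = 1 - L := by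
    rw [hL, hWc, measure_compl hWmeas (measure_ne_top μ _), measure_univ,
      ENNReal.toReal_sub_of_le prob_le_one ENNReal.one_ne_top, ENNReal.toReal_one]
    ring
  -- a.s. boundedness / Borel-Cantelli
  set B : Set Ω := {ω | Set.Finite {n : ℕ | (n : ℝ) + 1 ≤ X n ω}} with hB
  have hBc : μ Bᶜ = 0 := by
    have hsum' : ∑' n : ℕ, μ {ω | (n : ℝ) + 1 ≤ X n ω} ≠ ∞ := by
      refine ne_top_of_le_ne_top ENNReal.ofReal_ne_top (le_trans (le_of_eq ?_) hLC)
      exact tsum_congr fun n => hid_le n _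
    have hae := MeasureTheory.ae_finite_setOf_mem (μ := μ)
      (s := fun n : ℕ => {ω | (n : ℝ) + 1 ≤ X n ω}) hsum'
    rw [ae_iff] at hae
    have hBceq : Bᶜ = {ω | ¬ {n : ℕ | (n : ℝ) + 1 ≤ X n ω}.Finite} := by
      ext ω; simp [hB]
    rw [hBceq]
    simpa using hae
  have hsub : W ⊆ T ∪ Bᶜ := by
    intro ω hω
    by_cases hBω : ω ∈ B
    · left
      obtain ⟨n0, hn0⟩ := Set.mem_iUnion.mp hω
      have hn0' : (k : ℝ) + n0 ≤ X n0 ω := hn0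
      have hfin : Set.Finite {n : ℕ | (n : ℝ) + 1 ≤ X n ω} := hBω
      obtain ⟨M, hM⟩ := (hfin.image (fun n => X n ω - n)).bddAbove
      have hbdd : BddAbove (Set.range fun n : ℕ => X n ω - n) := by
        refine ⟨max M 1, ?_⟩
        rintro x ⟨n, rfl⟩
        by_cases hn : (n : ℝ) + 1 ≤ X n ω
        · exact le_max_of_le_left (hM (Set.mem_image_of_mem _ hn))
        · push_neg at hn
          refine le_max_of_le_right ?_
          show X n ω - (n : ℝ) ≤ 1
          linarith
      have h1 : (k : ℝ) ≤ X n0 ω - n0 := by linarith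
      exact le_trans h1 (le_ciSup hbdd n0)
    · exact Or.inr hBω
  have hWT : μ W ≤ μ T := by
    calc μ W ≤ μ (T ∪ Bᶜ) := measure_mono hsub
      _ ≤ μ T + μ Bᶜ := measure_union_le _ _
      _ = μ T := by rw [hBc, add_zero]
  have hWTr : (μ W).toReal ≤ (μ T).toReal :=
    ENNReal.toReal_mono (measure_ne_top μ _) hWT
  -- final chain
  have hfinal : S / (1 + S) ≤ (μ T).toReal := by
    have hexpS : Real.exp (-S) ≤ 1 / (1 + S) := by
      rw [Real.exp_neg]
      rw [one_div]
      refine inv_anti₀ (by linarith) ?_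
      have := Real.add_one_le_exp S
      linarith
    have h1 : 1 - 1/(1+S) ≤ 1 - Real.exp (-S) := by linarith
    have h2 : 1 - 1/(1+S) = S/(1+S) := by
      field_simp
      ring
    have h3 : 1 - Real.exp (-S) ≤ (μ W).toReal := by rw [hμW]; linarith
    linarith
  have hmono : S / (1 + C) ≤ S / (1 + S) := by
    apply div_le_div_of_nonneg_left hS0 (by linarith) (by linarith)
  calc (1/(1+C)) * S = S / (1+C) := by ring
    _ ≤ S / (1+S) := hmono
    _ ≤ (μ T).toReal := hfinal

/-- For i.i.d. nonnegative random variables `Xₙ` with mean at most `C`, setting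
`a_j := P[X₀ ≥ j]` and `b_k := P[sup_{n≥0}(Xₙ - n) ≥ k]`, one has
`(1/(1+C)) ∑_{j≥k} a_j ≤ b_k ≤ ∑_{j≥k} a_j` for every `k ≥ 1`. -/
theorem tail_bounds_for_sup {Ω : Type*} [MeasurableSpace Ω]
    (μ : Measure Ω) [IsProbabilityMeasure μ] (X : ℕ → Ω → ℝ)
    (hmeas : ∀ n, Measurable (X n))
    (hindep : iIndepFun X μ)
    (hident : ∀ n, μ.map (X n) = μ.map (X 0))
    (hpos : ∀ n ω, 0 ≤ X n ω)
    (hint : Integrable (X 0) μ)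
    (C : ℝ) (hC : ∫ ω, X 0 ω ∂μ ≤ C) :
    ∀ k : ℕ, 1 ≤ k →
      (1 / (1 + C)) * (∑' j : ℕ, (μ {ω | ((k + j : ℕ) : ℝ) ≤ X 0 ω}).toReal)
          ≤ (μ {ω | (k : ℝ) ≤ ⨆ n : ℕ, (X n ω - n)}).toReal ∧
      (μ {ω | (k : ℝ) ≤ ⨆ n : ℕ, (X n ω - n)}).toReal
          ≤ ∑' j : ℕ, (μ {ω | ((k + j : ℕ) : ℝ) ≤ X 0 ω}).toReal := by
  intro k hk
  have hid_le : ∀ (n : ℕ) (c : ℝ), μ {ω | c ≤ X n ω} = μ {ω | c ≤ X 0 ω} := by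
    intro n c
    have h1 : {ω | c ≤ X n ω} = X n ⁻¹' (Set.Ici c) := rfl
    have h2 : {ω | c ≤ X 0 ω} = X 0 ⁻¹' (Set.Ici c) := rfl
    rw [h1, h2, ← Measure.map_apply (hmeas n) measurableSet_Ici,
      ← Measure.map_apply (hmeas 0) measurableSet_Ici, hident n]
  have hid_lt : ∀ (n : ℕ) (c : ℝ), μ {ω | c < X n ω} = μ {ω | c < X 0 ω} := by
    intro n c
    have h1 : {ω | c < X n ω} = X n ⁻¹' (Set.Ioi c) := rfl
    have h2 : {ω | c < X 0 ω} = X 0 ⁻¹' (Set.Ioi c) := rfl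
    rw [h1, h2, ← Measure.map_apply (hmeas n) measurableSet_Ioi,
      ← Measure.map_apply (hmeas 0) measurableSet_Ioi, hident n]
  have hC0 : 0 ≤ C := le_trans (integral_nonneg fun ω => hpos 0 ω) hC
  have hLC : ∑' n : ℕ, μ {ω | (n : ℝ) + 1 ≤ X 0 ω} ≤ ENNReal.ofReal C := by
    refine le_trans (aux_layercake μ (hmeas 0) (hpos 0)) ?_
    rw [← ofReal_integral_eq_lintegral_ofReal hint (ae_of_all _ (hpos 0))]
    exact ENNReal.ofReal_le_ofReal hC
  have hset : ∀ j : ℕ, {ω | ((k + j : ℕ) : ℝ) ≤ X 0 ω} = {ω | (k : ℝ) + j ≤ X 0 ω} := by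
    intro j
    rw [show ((k + j : ℕ) : ℝ) = (k : ℝ) + (j : ℝ) by push_cast; ring]
  simp only [hset]
  have htail := aux_tail μ X C hLC k hk
  have hne : ∑' n : ℕ, μ {ω | (k : ℝ) + n ≤ X 0 ω} ≠ ⊤ :=
    ne_top_of_le_ne_top ENNReal.ofReal_ne_top htail
  constructor
  · exact aux_lower μ X hmeas hindep hpos hid_le C hC0 hLC k hk
  · have hup := aux_upper μ X hmeas hpos hid_le hid_lt C hC0 hLC k hk
    calc (μ {ω | (k : ℝ) ≤ ⨆ n : ℕ, (X n ω - n)}).toReal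
        ≤ (∑' n : ℕ, μ {ω | (k : ℝ) + n ≤ X 0 ω}).toReal := ENNReal.toReal_mono hne hup
      _ = ∑' n : ℕ, (μ {ω | (k : ℝ) + n ≤ X 0 ω}).toReal :=
          ENNReal.tsum_toReal_eq fun n => measure_ne_top μ _
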